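/- If (C,P) is a higher-order Σ-doctrine with full co-comprehension which is also a restricted Σ(C_P^o)-doctrine, then the opposite doctrine (C,P^o), given by P^o(A) = P(A)^op, is a tripos with full comprehension. -/

import Mathlib

open CategoryTheory CategoryTheory.Limits

universe w v u

/-- A doctrine: a contravariant functor from a category with finite products
to partially ordered sets, presented via a family of fibers `P` and monotone
reindexing maps. -/
structure Doctrine (C : Type u) [Category.{v} C] (P : C → Type w)
    [∀ A, PartialOrder (P A)] where
  map : ∀ {X A : C}, (X ⟶ A) → P A → P X
  map_mono : ∀ {X A : C} (f : X ⟶ A) ⦃α β : P A⦄, α ≤ β → map f α ≤ map f β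
  map_id : ∀ {A : C} (α : P A), map (𝟙 A) α = α
  map_comp : ∀ {X Y A : C} (f : X ⟶ Y) (g : Y ⟶ A) (α : P A),
    map (f ≫ g) α = map f (map g α)

variable {C : Type u} [Category.{v} C] {P : C → Type w}

/-- The opposite doctrine `P^o`, with fibers the opposite posets. -/
def Doctrine.op [∀ A, PartialOrder (P A)] (D : Doctrine C P) :
    Doctrine C (fun A => (P A)ᵒᵈ) where
  map f α := OrderDual.toDual (D.map f (OrderDual.ofDual α))
  map_mono f _ _ h := D.map_mono f h
  map_id := D.map_id
  map_comp := D.map_comp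

/-- Comprehension structure on a doctrine with fiberwise top elements. -/
structure Comprehension [∀ A, PartialOrder (P A)] [∀ A, OrderTop (P A)]
    (D : Doctrine C P) where
  cObj : ∀ {A : C}, P A → C
  cArr : ∀ {A : C} (α : P A), cObj α ⟶ A
  map_cArr : ∀ {A : C} (α : P A), D.map (cArr α) α = ⊤
  univ : ∀ {A Y : C} (α : P A) (f : Y ⟶ A), D.map f α = ⊤ →
    ∃! k : Y ⟶ cObj α, k ≫ cArr α = f

/-- Fullness of comprehension: the functor `α ↦ ⌊α⌋` into subobjects is full. -/
def Comprehension.IsFull [∀ A, PartialOrder (P A)] [∀ A, OrderTop (P A)]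
    {D : Doctrine C P} (cmp : Comprehension D) : Prop :=
  ∀ (A : C) (α β : P A) (g : cmp.cObj α ⟶ cmp.cObj β),
    g ≫ cmp.cArr β = cmp.cArr α → α ≤ β

/-- Co-comprehension structure on a doctrine with fiberwise bottom elements. -/
structure CoComprehension [∀ A, PartialOrder (P A)] [∀ A, OrderBot (P A)]
    (D : Doctrine C P) where
  oObj : ∀ {A : C}, P A → C
  oArr : ∀ {A : C} (α : P A), oObj α ⟶ A
  map_oArr : ∀ {A : C} (α : P A), D.map (oArr α) α = ⊥
  univ : ∀ {A Y : C} (α : P A) (f : Y ⟶ A), D.map f α = ⊥ →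
    ∃! k : Y ⟶ oObj α, k ≫ oArr α = f

/-- Fullness of co-comprehension: the contravariant functor `α ↦ ⌈α⌉` into
subobjects is full. -/
def CoComprehension.IsFull [∀ A, PartialOrder (P A)] [∀ A, OrderBot (P A)]
    {D : Doctrine C P} (co : CoComprehension D) : Prop :=
  ∀ (A : C) (α β : P A) (g : co.oObj β ⟶ co.oObj α),
    g ≫ co.oArr α = co.oArr β → α ≤ β

/-- A stable initial object: an initial object `Z` with `X × Z ≅ Z` for all `X`. -/
def StableInitial [HasFiniteProducts C] (Z : C) : Prop :=
  Nonempty (IsInitial Z) ∧ ∀ X : C, Nonempty ((X ⨯ Z) ≅ Z)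

/-- The axiom of choice for a doctrine: along every projection `π_Γ : Γ × A → Γ`
with `A` not a stable initial object, reindexing has a left adjoint, and every
`ψ ∈ P(Γ × A)` has a choice arrow `ε_ψ : Γ ⟶ A` with `Σ_{π_Γ}ψ = ⟨id, ε_ψ⟩*ψ`. -/
structure AxChoice [HasFiniteProducts C] [∀ A, PartialOrder (P A)]
    (D : Doctrine C P) where
  Sig : ∀ (Γ A : C), ¬ StableInitial A → P (Γ ⨯ A) → P Γ
  adj : ∀ {Γ A : C} (h : ¬ StableInitial A) (ψ : P (Γ ⨯ A)) (β : P Γ),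
    Sig Γ A h ψ ≤ β ↔ ψ ≤ D.map prod.fst β
  eps : ∀ {Γ A : C}, ¬ StableInitial A → P (Γ ⨯ A) → (Γ ⟶ A)
  eps_spec : ∀ {Γ A : C} (h : ¬ StableInitial A) (ψ : P (Γ ⨯ A)),
    Sig Γ A h ψ = D.map (prod.lift (𝟙 Γ) (eps h ψ)) ψ

/-- Elementary structure: equality predicates `δ_A` such that
`ψ ↦ π₁*ψ ⊓ π₂₃*δ_A` is left adjoint to reindexing along `id_X × Δ_A`. -/
structure Elementary [HasFiniteProducts C] [∀ A, SemilatticeInf (P A)]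
    (D : Doctrine C P) where
  eq : ∀ A : C, P (A ⨯ A)
  eq_adj : ∀ (X A : C) (ψ : P (X ⨯ A)) (φ : P ((X ⨯ A) ⨯ A)),
    (D.map prod.fst ψ ⊓ D.map (prod.map prod.snd (𝟙 A)) (eq A)) ≤ φ ↔
      ψ ≤ D.map (prod.lift (𝟙 (X ⨯ A)) prod.snd) φ

/-- An eaco: an elementary doctrine with full co-comprehension satisfying AC,
together with the compatibility of choice arrows for graphs of co-comprehension
arrows with reindexing. -/
structure Eaco [HasFiniteProducts C] [∀ A, SemilatticeInf (P A)]
    [∀ A, OrderBot (P A)] (D : Doctrine C P) where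
  elem : Elementary D
  cocmp : CoComprehension D
  full : cocmp.IsFull
  ac : AxChoice D
  compat : ∀ {X A : C} (f : X ⟶ A) (α : P A)
      (h1 : ¬ StableInitial (cocmp.oObj α))
      (h2 : ¬ StableInitial (cocmp.oObj (D.map f α))),
      D.map f (D.map (prod.lift (𝟙 A)
          (ac.eps h1 (D.map (prod.map (𝟙 A) (cocmp.oArr α)) (elem.eq A))))
        (D.map (prod.map (𝟙 A) (cocmp.oArr α)) (elem.eq A)))
      = D.map (prod.lift (𝟙 X)
          (ac.eps h2 (D.map (prod.map (𝟙 X) (cocmp.oArr (D.map f α))) (elem.eq X))))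
        (D.map (prod.map (𝟙 X) (cocmp.oArr (D.map f α))) (elem.eq X))

/-- Weak power objects: the doctrine is higher order. -/
structure HigherOrder [HasFiniteProducts C] [∀ A, PartialOrder (P A)]
    (D : Doctrine C P) where
  pow : C → C
  mem : ∀ A : C, P (A ⨯ pow A)
  classify : ∀ (A Y : C) (φ : P (A ⨯ Y)),
    ∃ χ : Y ⟶ pow A, D.map (prod.map (𝟙 A) χ) (mem A) = φ

/-- A heaco: a higher order eaco. -/
structure Heaco [HasFiniteProducts C] [∀ A, SemilatticeInf (P A)]
    [∀ A, OrderBot (P A)] (D : Doctrine C P) where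
  eaco : Eaco D
  ho : HigherOrder D

/-- Implicational structure relative to right adjoints `Pi` along projections. -/
structure Implicational [HasFiniteProducts C] [∀ A, PartialOrder (P A)]
    (D : Doctrine C P) (Pi : ∀ (Γ A : C), P (Γ ⨯ A) → P Γ) where
  imp : ∀ {A : C}, P A → P A → P A
  map_imp : ∀ {X A : C} (f : X ⟶ A) (α β : P A),
    D.map f (imp α β) = imp (D.map f α) (D.map f β)
  pi_imp : ∀ {Γ A : C} (α : P Γ) (β : P (Γ ⨯ A)),
    Pi Γ A (imp (D.map prod.fst α) β) = imp α (Pi Γ A β)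
  ax_a : ∀ {A : C} (φ ψ : P A), φ ≤ imp ψ φ
  ax_b : ∀ {A : C} (γ φ ψ : P A), imp γ (imp φ ψ) ≤ imp (imp γ φ) (imp γ ψ)
  ax_c : ∀ {A : C} (γ φ ψ : P A), γ ≤ imp φ ψ → γ ≤ φ → γ ≤ ψ
  ax_d : ∀ {A : C} (γ φ ψ : P A), φ ≤ ψ → γ ≤ imp φ ψ

/-- A tripos: a Heyting-algebra valued doctrine with `Σ` and `Π` along
projections satisfying Beck–Chevalley, equality predicates, and weak power
objects. -/
structure Tripos [HasFiniteProducts C] [∀ A, PartialOrder (P A)]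
    (D : Doctrine C P) where
  inf : ∀ {A : C}, P A → P A → P A
  sup : ∀ {A : C}, P A → P A → P A
  himp : ∀ {A : C}, P A → P A → P A
  top : ∀ A : C, P A
  bot : ∀ A : C, P A
  inf_le_left : ∀ {A : C} (α β : P A), inf α β ≤ α
  inf_le_right : ∀ {A : C} (α β : P A), inf α β ≤ β
  le_inf : ∀ {A : C} (γ α β : P A), γ ≤ α → γ ≤ β → γ ≤ inf α β
  le_sup_left : ∀ {A : C} (α β : P A), α ≤ sup α β
  le_sup_right : ∀ {A : C} (α β : P A), β ≤ sup α β
  sup_le : ∀ {A : C} (α β γ : P A), α ≤ γ → β ≤ γ → sup α β ≤ γ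
  le_top : ∀ {A : C} (α : P A), α ≤ top A
  bot_le : ∀ {A : C} (α : P A), bot A ≤ α
  himp_adj : ∀ {A : C} (γ α β : P A), γ ≤ himp α β ↔ inf γ α ≤ β
  map_inf : ∀ {X A : C} (f : X ⟶ A) (α β : P A),
    D.map f (inf α β) = inf (D.map f α) (D.map f β)
  map_sup : ∀ {X A : C} (f : X ⟶ A) (α β : P A),
    D.map f (sup α β) = sup (D.map f α) (D.map f β)
  map_himp : ∀ {X A : C} (f : X ⟶ A) (α β : P A),
    D.map f (himp α β) = himp (D.map f α) (D.map f β)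
  map_top : ∀ {X A : C} (f : X ⟶ A), D.map f (top A) = top X
  map_bot : ∀ {X A : C} (f : X ⟶ A), D.map f (bot A) = bot X
  Sig : ∀ (Γ A : C), P (Γ ⨯ A) → P Γ
  Sig_adj : ∀ {Γ A : C} (ψ : P (Γ ⨯ A)) (β : P Γ),
    Sig Γ A ψ ≤ β ↔ ψ ≤ D.map prod.fst β
  Sig_bc : ∀ {Γ Δ A : C} (f : Δ ⟶ Γ) (ψ : P (Γ ⨯ A)),
    D.map f (Sig Γ A ψ) = Sig Δ A (D.map (prod.map f (𝟙 A)) ψ)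
  Pi : ∀ (Γ A : C), P (Γ ⨯ A) → P Γ
  Pi_adj : ∀ {Γ A : C} (ψ : P (Γ ⨯ A)) (β : P Γ),
    β ≤ Pi Γ A ψ ↔ D.map prod.fst β ≤ ψ
  Pi_bc : ∀ {Γ Δ A : C} (f : Δ ⟶ Γ) (ψ : P (Γ ⨯ A)),
    D.map f (Pi Γ A ψ) = Pi Δ A (D.map (prod.map f (𝟙 A)) ψ)
  eq : ∀ X : C, P (X ⨯ X)
  eq_spec : ∀ {X : C} (α : P (X ⨯ X)),
    top X ≤ D.map (prod.lift (𝟙 X) (𝟙 X)) α ↔ eq X ≤ α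
  pow : C → C
  mem : ∀ A : C, P (A ⨯ pow A)
  classify : ∀ (A Y : C) (φ : P (A ⨯ Y)),
    ∃ χ : Y ⟶ pow A, D.map (prod.map (𝟙 A) χ) (mem A) = φ

namespace Statement12Aux

variable {C : Type u} [Category.{v} C] [HasFiniteProducts C]
variable {Q : C → Type w} [∀ A, PartialOrder (Q A)] [∀ A, OrderTop (Q A)]

/-- A bundle of structure on a doctrine `E` sufficient to build a tripos:
`Π` along projections with Beck–Chevalley, higher order structure, full
comprehension, and restricted `Π` along comprehension arrows with restricted
Beck–Chevalley. -/
structure Setup (E : Doctrine C Q) where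
  Pi : ∀ (Γ A : C), Q (Γ ⨯ A) → Q Γ
  Pi_adj : ∀ {Γ A : C} (ψ : Q (Γ ⨯ A)) (β : Q Γ),
    β ≤ Pi Γ A ψ ↔ E.map prod.fst β ≤ ψ
  Pi_bc : ∀ {Γ Δ A : C} (f : Δ ⟶ Γ) (ψ : Q (Γ ⨯ A)),
    E.map f (Pi Γ A ψ) = Pi Δ A (E.map (prod.map f (𝟙 A)) ψ)
  ho : HigherOrder E
  cmp : Comprehension E
  full : cmp.IsFull
  PiC : ∀ {A : C} (α : Q A), Q (cmp.cObj α) → Q A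
  PiC_adj : ∀ {A : C} (α : Q A) (γ : Q (cmp.cObj α)) (β : Q A),
    β ≤ PiC α γ ↔ E.map (cmp.cArr α) β ≤ γ
  PiC_bc : ∀ {X A : C} (f : X ⟶ A) (α : Q A)
    (q : cmp.cObj (E.map f α) ⟶ cmp.cObj α),
    q ≫ cmp.cArr α = cmp.cArr (E.map f α) ≫ f →
    ∀ ξ : Q A,
      E.map f (PiC α (E.map (cmp.cArr α) ξ))
        = PiC (E.map f α) (E.map q (E.map (cmp.cArr α) ξ))

namespace Setup

variable {E : Doctrine C Q} (S : Setup E)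

lemma counit {Γ A : C} (ψ : Q (Γ ⨯ A)) : E.map prod.fst (S.Pi Γ A ψ) ≤ ψ :=
  (S.Pi_adj ψ (S.Pi Γ A ψ)).mp le_rfl

lemma inst {Γ A : C} (ψ : Q (Γ ⨯ A)) (g : Γ ⟶ A) :
    S.Pi Γ A ψ ≤ E.map (prod.lift (𝟙 Γ) g) ψ := by
  have h := E.map_mono (prod.lift (𝟙 Γ) g) (S.counit ψ)
  rwa [← E.map_comp, prod.lift_fst, E.map_id] at h

lemma le_iff {A : C} (α β : Q A) : α ≤ β ↔ E.map (S.cmp.cArr α) β = ⊤ := by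
  constructor
  · intro h
    exact le_antisymm le_top (S.cmp.map_cArr α ▸ E.map_mono _ h)
  · intro h
    obtain ⟨k, hk, -⟩ := S.cmp.univ β (S.cmp.cArr α) h
    exact S.full A α β k hk

/-- Implication, defined via restricted `Π` along the comprehension arrow. -/
def imp {A : C} (α β : Q A) : Q A := S.PiC α (E.map (S.cmp.cArr α) β)

lemma le_imp_iff {A : C} (γ α β : Q A) :
    γ ≤ S.imp α β ↔ E.map (S.cmp.cArr α) γ ≤ E.map (S.cmp.cArr α) β :=
  S.PiC_adj α _ γ

lemma imp_of_le {A : C} {α β : Q A} (h : α ≤ β) : S.imp α β = ⊤ := by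
  refine le_antisymm le_top ?_
  rw [S.le_imp_iff, (S.le_iff α β).mp h]
  exact le_top

lemma imp_self {A : C} (α : Q A) : S.imp α α = ⊤ := S.imp_of_le le_rfl

lemma qmap {X A : C} (f : X ⟶ A) (α : Q A) :
    ∃ q : S.cmp.cObj (E.map f α) ⟶ S.cmp.cObj α,
      q ≫ S.cmp.cArr α = S.cmp.cArr (E.map f α) ≫ f := by
  have h : E.map (S.cmp.cArr (E.map f α) ≫ f) α = ⊤ := by
    rw [E.map_comp]; exact S.cmp.map_cArr _
  obtain ⟨q, hq, -⟩ := S.cmp.univ α _ h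
  exact ⟨q, hq⟩

lemma map_imp {X A : C} (f : X ⟶ A) (α β : Q A) :
    E.map f (S.imp α β) = S.imp (E.map f α) (E.map f β) := by
  obtain ⟨q, hq⟩ := S.qmap f α
  have h := S.PiC_bc f α q hq β
  unfold imp
  rw [h, ← E.map_comp, hq, E.map_comp]

lemma top_section (A : C) :
    ∃ k : A ⟶ S.cmp.cObj (⊤ : Q A),
      k ≫ S.cmp.cArr (⊤ : Q A) = 𝟙 A ∧ S.cmp.cArr (⊤ : Q A) ≫ k = 𝟙 _ := by
  obtain ⟨k, hk, -⟩ := S.cmp.univ (⊤ : Q A) (𝟙 A) (E.map_id ⊤)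
  obtain ⟨j, hj, hju⟩ := S.cmp.univ (⊤ : Q A) (S.cmp.cArr ⊤) (S.cmp.map_cArr ⊤)
  refine ⟨k, hk, ?_⟩
  have h1 : (S.cmp.cArr (⊤ : Q A) ≫ k) ≫ S.cmp.cArr ⊤ = S.cmp.cArr ⊤ := by
    rw [Category.assoc, hk, Category.comp_id]
  rw [hju _ h1, hju (𝟙 _) (Category.id_comp _)]

lemma imp_top_left {A : C} (x : Q A) : S.imp ⊤ x = x := by
  obtain ⟨k, hk1, hk2⟩ := S.top_section A
  have emb : ∀ y z : Q A,
      E.map (S.cmp.cArr (⊤ : Q A)) y ≤ E.map (S.cmp.cArr (⊤ : Q A)) z → y ≤ z := by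
    intro y z h
    have h2 := E.map_mono k h
    rwa [← E.map_comp, ← E.map_comp, hk1, E.map_id, E.map_id] at h2
  refine le_antisymm (emb _ _ ((S.le_imp_iff _ _ _).mp le_rfl)) ?_
  rw [S.le_imp_iff]

lemma mp {A : C} {γ α β : Q A} (h1 : γ ≤ S.imp α β) (h2 : γ ≤ α) : γ ≤ β := by
  rw [S.le_iff] at h1 h2 ⊢
  rwa [S.map_imp, h2, S.imp_top_left] at h1

lemma le_of_imp_eq_top {A : C} {α β : Q A} (h : S.imp α β = ⊤) : α ≤ β :=
  S.mp (h ▸ le_top) le_rfl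

lemma le_imp_self {A : C} (α β : Q A) : β ≤ S.imp α β :=
  (S.le_imp_iff _ _ _).mpr le_rfl

lemma imp_mono_right {A : C} (α : Q A) {β β' : Q A} (h : β ≤ β') :
    S.imp α β ≤ S.imp α β' := by
  rw [S.le_imp_iff]
  exact le_trans ((S.le_imp_iff _ _ _).mp le_rfl) (E.map_mono _ h)

lemma imp_flip {A : C} {γ α β : Q A} (h : γ ≤ S.imp α β) : α ≤ S.imp γ β := by
  rw [S.le_imp_iff]
  have h1 : E.map (S.cmp.cArr γ) (S.imp α β) = ⊤ := (S.le_iff _ _).mp h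
  rw [S.map_imp] at h1
  exact S.le_of_imp_eq_top h1

/-- The object of propositions. -/
noncomputable abbrev Om : C := S.ho.pow (⊤_ C)

/-- The generic proposition over `X`. -/
noncomputable def sig (X : C) : Q (X ⨯ S.Om) :=
  E.map (prod.map (terminal.from X) (𝟙 S.Om)) (S.ho.mem (⊤_ C))

lemma sig_stab {X Y : C} (f : X ⟶ Y) :
    E.map (prod.map f (𝟙 S.Om)) (S.sig Y) = S.sig X := by
  unfold sig
  rw [← E.map_comp]
  congr 1
  apply Limits.prod.hom_ext <;> simp

lemma sig_classify {A : C} (α : Q A) :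
    ∃ g : A ⟶ S.Om, E.map (prod.lift (𝟙 A) g) (S.sig A) = α := by
  obtain ⟨χ, hχ⟩ := S.ho.classify (⊤_ C) A (E.map prod.snd α)
  refine ⟨χ, ?_⟩
  unfold sig
  rw [← E.map_comp]
  have h1 : prod.lift (𝟙 A) χ ≫ prod.map (terminal.from A) (𝟙 S.Om)
      = prod.lift (terminal.from A) (𝟙 A) ≫ prod.map (𝟙 (⊤_ C)) χ := by
    apply Limits.prod.hom_ext <;> simp
  rw [h1, E.map_comp, hχ, ← E.map_comp, prod.lift_snd, E.map_id]

lemma top_eq (A : C) : (⊤ : Q A) = S.Pi A S.Om (S.imp (S.sig A) (S.sig A)) := by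
  refine le_antisymm ?_ le_top
  rw [S.Pi_adj, S.le_imp_iff, S.cmp.map_cArr]
  exact le_top

include S in
lemma map_top {X A : C} (f : X ⟶ A) : E.map f (⊤ : Q A) = ⊤ := by
  rw [Setup.top_eq S A, S.Pi_bc, S.map_imp, S.sig_stab, ← Setup.top_eq S X]

omit [∀ A, OrderTop (Q A)] in
lemma map_fst_comm {X A B : C} (f : X ⟶ A) (α : Q A) :
    E.map (prod.map f (𝟙 B)) (E.map (prod.fst : A ⨯ B ⟶ A) α)
      = E.map prod.fst (E.map f α) := by
  rw [← E.map_comp, ← E.map_comp, prod.map_fst]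

lemma inst_fst {A : C} (α : Q A) (g : A ⟶ S.Om) :
    E.map (prod.lift (𝟙 A) g) (E.map (prod.fst : A ⨯ S.Om ⟶ A) α) = α := by
  rw [← E.map_comp, prod.lift_fst, E.map_id]

/-- Meet, via the second-order encoding `∀p. ((α ⇒ β ⇒ p) ⇒ p)`. -/
noncomputable def inf' {A : C} (α β : Q A) : Q A :=
  S.Pi A S.Om (S.imp (S.imp (E.map prod.fst α)
    (S.imp (E.map prod.fst β) (S.sig A))) (S.sig A))

/-- Join, via the second-order encoding `∀p. ((α ⇒ p) ⇒ (β ⇒ p) ⇒ p)`. -/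
noncomputable def sup' {A : C} (α β : Q A) : Q A :=
  S.Pi A S.Om (S.imp (S.imp (E.map prod.fst α) (S.sig A))
    (S.imp (S.imp (E.map prod.fst β) (S.sig A)) (S.sig A)))

/-- Falsity, via the second-order encoding `∀p. p`. -/
noncomputable def bot' (A : C) : Q A := S.Pi A S.Om (S.sig A)

lemma map_inf' {X A : C} (f : X ⟶ A) (α β : Q A) :
    E.map f (S.inf' α β) = S.inf' (E.map f α) (E.map f β) := by
  unfold inf'
  rw [S.Pi_bc]
  simp only [S.map_imp, S.sig_stab, map_fst_comm (E := E)]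

lemma map_sup' {X A : C} (f : X ⟶ A) (α β : Q A) :
    E.map f (S.sup' α β) = S.sup' (E.map f α) (E.map f β) := by
  unfold sup'
  rw [S.Pi_bc]
  simp only [S.map_imp, S.sig_stab, map_fst_comm (E := E)]

lemma map_bot' {X A : C} (f : X ⟶ A) : E.map f (S.bot' A) = S.bot' X := by
  unfold bot'
  rw [S.Pi_bc, S.sig_stab]

lemma inf'_le_left {A : C} (α β : Q A) : S.inf' α β ≤ α := by
  obtain ⟨g, hg⟩ := S.sig_classify α
  have h := S.inst (S.imp (S.imp (E.map prod.fst α)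
    (S.imp (E.map prod.fst β) (S.sig A))) (S.sig A)) g
  simp only [S.map_imp, hg, S.inst_fst] at h
  rwa [S.imp_of_le (S.le_imp_self β α), S.imp_top_left] at h

lemma inf'_le_right {A : C} (α β : Q A) : S.inf' α β ≤ β := by
  obtain ⟨g, hg⟩ := S.sig_classify β
  have h := S.inst (S.imp (S.imp (E.map prod.fst α)
    (S.imp (E.map prod.fst β) (S.sig A))) (S.sig A)) g
  simp only [S.map_imp, hg, S.inst_fst] at h
  rwa [S.imp_self, S.imp_of_le le_top, S.imp_top_left] at h

lemma le_inf' {A : C} {δ α β : Q A} (h1 : δ ≤ α) (h2 : δ ≤ β) :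
    δ ≤ S.inf' α β := by
  unfold inf'
  rw [S.Pi_adj, S.le_imp_iff]
  have hθ := S.cmp.map_cArr
    (S.imp (E.map prod.fst α) (S.imp (E.map prod.fst β) (S.sig A)))
  set c := S.cmp.cArr
    (S.imp (E.map prod.fst α) (S.imp (E.map prod.fst β) (S.sig A))) with hc
  rw [S.map_imp, S.map_imp] at hθ
  have k1 := S.le_of_imp_eq_top hθ
  have d1 : E.map c (E.map prod.fst δ) ≤ E.map c (E.map prod.fst α) :=
    E.map_mono _ (E.map_mono _ h1)
  have d2 : E.map c (E.map prod.fst δ) ≤ E.map c (E.map prod.fst β) :=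
    E.map_mono _ (E.map_mono _ h2)
  exact S.mp (le_trans d1 k1) d2

lemma himp_adj' {A : C} (γ α β : Q A) :
    γ ≤ S.imp α β ↔ S.inf' γ α ≤ β := by
  constructor
  · intro h
    exact S.mp (le_trans (S.inf'_le_left γ α) h) (S.inf'_le_right γ α)
  · intro h
    have pair : γ ≤ S.imp α (S.inf' γ α) := by
      rw [S.le_imp_iff, S.map_inf']
      refine S.le_inf' le_rfl ?_
      rw [S.cmp.map_cArr]
      exact le_top
    exact le_trans pair (S.imp_mono_right α h)

lemma le_sup'_left {A : C} (α β : Q A) : α ≤ S.sup' α β := by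
  unfold sup'
  rw [S.Pi_adj]
  have h1 : E.map prod.fst α
      ≤ S.imp (S.imp (E.map prod.fst α) (S.sig A)) (S.sig A) :=
    S.imp_flip le_rfl
  exact le_trans h1 (S.imp_mono_right _ (S.le_imp_self _ _))

lemma le_sup'_right {A : C} (α β : Q A) : β ≤ S.sup' α β := by
  unfold sup'
  rw [S.Pi_adj]
  have h1 : E.map prod.fst β
      ≤ S.imp (S.imp (E.map prod.fst β) (S.sig A)) (S.sig A) :=
    S.imp_flip le_rfl
  exact le_trans h1 (S.le_imp_self _ _)

lemma sup'_le {A : C} {α β γ : Q A} (h1 : α ≤ γ) (h2 : β ≤ γ) :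
    S.sup' α β ≤ γ := by
  obtain ⟨g, hg⟩ := S.sig_classify γ
  have h := S.inst (S.imp (S.imp (E.map prod.fst α) (S.sig A))
    (S.imp (S.imp (E.map prod.fst β) (S.sig A)) (S.sig A))) g
  simp only [S.map_imp, hg, S.inst_fst] at h
  rwa [S.imp_of_le h1, S.imp_of_le h2, S.imp_top_left, S.imp_top_left] at h

lemma bot'_le {A : C} (α : Q A) : S.bot' A ≤ α := by
  obtain ⟨g, hg⟩ := S.sig_classify α
  have h := S.inst (S.sig A) g
  rwa [hg] at h

/-- Existential quantification, via the second-order encoding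
`∃a.ψ := ∀p. ((∀a. ψ ⇒ p) ⇒ p)`. -/
noncomputable def sigE (Γ A : C) (ψ : Q (Γ ⨯ A)) : Q Γ :=
  S.Pi Γ S.Om (S.imp
    (S.Pi (Γ ⨯ S.Om) A (S.imp (E.map (prod.map prod.fst (𝟙 A)) ψ)
      (E.map prod.fst (S.sig Γ))))
    (S.sig Γ))

lemma sigE_unit {Γ A : C} (ψ : Q (Γ ⨯ A)) :
    ψ ≤ E.map prod.fst (S.sigE Γ A ψ) := by
  unfold sigE
  rw [S.Pi_bc, S.map_imp, S.sig_stab, S.Pi_adj]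
  apply S.imp_flip
  rw [S.Pi_bc]
  refine le_trans (S.inst _ ((prod.fst : (Γ ⨯ A) ⨯ S.Om ⟶ Γ ⨯ A) ≫ prod.snd))
    (le_of_eq ?_)
  have e1 : (prod.lift (𝟙 ((Γ ⨯ A) ⨯ S.Om)) (prod.fst ≫ prod.snd)
        ≫ prod.map (prod.map (prod.fst : Γ ⨯ A ⟶ Γ) (𝟙 S.Om)) (𝟙 A))
        ≫ prod.map prod.fst (𝟙 A)
      = (prod.fst : (Γ ⨯ A) ⨯ S.Om ⟶ Γ ⨯ A) := by
    apply Limits.prod.hom_ext <;> simp [prod.lift_fst, prod.lift_snd, prod.lift_fst_assoc, prod.lift_snd_assoc]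
  have e2 : (prod.lift (𝟙 ((Γ ⨯ A) ⨯ S.Om)) (prod.fst ≫ prod.snd)
        ≫ prod.map (prod.map (prod.fst : Γ ⨯ A ⟶ Γ) (𝟙 S.Om)) (𝟙 A))
        ≫ prod.fst
      = prod.map (prod.fst : Γ ⨯ A ⟶ Γ) (𝟙 S.Om) := by
    apply Limits.prod.hom_ext <;> simp [prod.lift_fst, prod.lift_snd, prod.lift_fst_assoc, prod.lift_snd_assoc]
  rw [← E.map_comp, S.map_imp, ← E.map_comp, ← E.map_comp, e1, e2, S.sig_stab]

lemma sigE_adj {Γ A : C} (ψ : Q (Γ ⨯ A)) (β : Q Γ) :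
    S.sigE Γ A ψ ≤ β ↔ ψ ≤ E.map prod.fst β := by
  constructor
  · intro h
    exact le_trans (S.sigE_unit ψ) (E.map_mono _ h)
  · intro h
    obtain ⟨g, hg⟩ := S.sig_classify β
    have hi := S.inst (S.imp
      (S.Pi (Γ ⨯ S.Om) A (S.imp (E.map (prod.map prod.fst (𝟙 A)) ψ)
        (E.map prod.fst (S.sig Γ))))
      (S.sig Γ)) g
    have e1 : prod.map (prod.lift (𝟙 Γ) g) (𝟙 A) ≫ prod.map prod.fst (𝟙 A)
        = 𝟙 (Γ ⨯ A) := by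
      apply Limits.prod.hom_ext <;> simp [prod.lift_fst, prod.lift_snd, prod.lift_fst_assoc, prod.lift_snd_assoc]
    have e2 : prod.map (prod.lift (𝟙 Γ) g) (𝟙 A)
          ≫ (prod.fst : (Γ ⨯ S.Om) ⨯ A ⟶ Γ ⨯ S.Om)
        = prod.fst ≫ prod.lift (𝟙 Γ) g := by
      apply Limits.prod.hom_ext <;> simp
    rw [S.map_imp, hg, S.Pi_bc, S.map_imp, ← E.map_comp, ← E.map_comp,
      e1, E.map_id, e2, E.map_comp, hg] at hi
    have hT : S.Pi Γ A (S.imp ψ (E.map prod.fst β)) = ⊤ := by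
      refine le_antisymm le_top ?_
      rw [S.Pi_adj, S.map_top, S.imp_of_le h]
    rwa [hT, S.imp_top_left] at hi

lemma sigE_bc {Γ Δ A : C} (f : Δ ⟶ Γ) (ψ : Q (Γ ⨯ A)) :
    E.map f (S.sigE Γ A ψ) = S.sigE Δ A (E.map (prod.map f (𝟙 A)) ψ) := by
  unfold sigE
  rw [S.Pi_bc, S.map_imp, S.sig_stab, S.Pi_bc, S.map_imp]
  have e1 : E.map (prod.map (prod.map f (𝟙 S.Om)) (𝟙 A))
        (E.map (prod.map prod.fst (𝟙 A)) ψ)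
      = E.map (prod.map prod.fst (𝟙 A)) (E.map (prod.map f (𝟙 A)) ψ) := by
    rw [← E.map_comp, ← E.map_comp]
    congr 1
    apply Limits.prod.hom_ext <;> simp
  have e2 : E.map (prod.map (prod.map f (𝟙 S.Om)) (𝟙 A))
        (E.map prod.fst (S.sig Γ))
      = E.map prod.fst (S.sig Δ) := by
    rw [← E.map_comp, ← S.sig_stab f, ← E.map_comp]
    congr 1
    apply Limits.prod.hom_ext <;> simp
  rw [e1, e2]

/-- Equality, via the Leibniz encoding `∀P. (y ∈ P ⇒ x ∈ P)`. -/
noncomputable def eq' (X : C) : Q (X ⨯ X) :=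
  S.Pi (X ⨯ X) (S.ho.pow X)
    (S.imp (E.map (prod.lift (prod.fst ≫ prod.snd) prod.snd) (S.ho.mem X))
      (E.map (prod.lift (prod.fst ≫ prod.fst) prod.snd) (S.ho.mem X)))

lemma eq'_spec {X : C} (α : Q (X ⨯ X)) :
    (⊤ : Q X) ≤ E.map (prod.lift (𝟙 X) (𝟙 X)) α ↔ S.eq' X ≤ α := by
  constructor
  · intro h
    obtain ⟨χ, hχ⟩ := S.ho.classify X X α
    have hi := S.inst
      (S.imp (E.map (prod.lift (prod.fst ≫ prod.snd) prod.snd) (S.ho.mem X))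
        (E.map (prod.lift (prod.fst ≫ prod.fst) prod.snd) (S.ho.mem X)))
      (prod.snd ≫ χ)
    have e1 : prod.lift (𝟙 (X ⨯ X)) (prod.snd ≫ χ)
          ≫ prod.lift (prod.fst ≫ prod.snd) prod.snd
        = prod.lift (prod.snd : X ⨯ X ⟶ X) prod.snd ≫ prod.map (𝟙 X) χ := by
      apply Limits.prod.hom_ext <;> simp [prod.lift_fst, prod.lift_snd, prod.lift_fst_assoc, prod.lift_snd_assoc]
    have e2 : prod.lift (𝟙 (X ⨯ X)) (prod.snd ≫ χ)
          ≫ prod.lift (prod.fst ≫ prod.fst) prod.snd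
        = prod.map (𝟙 X) χ := by
      apply Limits.prod.hom_ext <;> simp [prod.lift_fst, prod.lift_snd, prod.lift_fst_assoc, prod.lift_snd_assoc]
    rw [S.map_imp, ← E.map_comp, ← E.map_comp, e1, e2, E.map_comp, hχ] at hi
    have h2 : E.map (prod.lift (prod.snd : X ⨯ X ⟶ X) prod.snd) α = ⊤ := by
      have e3 : prod.lift (prod.snd : X ⨯ X ⟶ X) prod.snd
          = prod.snd ≫ prod.lift (𝟙 X) (𝟙 X) := by
        apply Limits.prod.hom_ext <;> simp
      rw [e3, E.map_comp]
      refine le_antisymm le_top ?_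
      calc (⊤ : Q (X ⨯ X)) = E.map prod.snd ⊤ := (S.map_top _).symm
        _ ≤ _ := E.map_mono _ h
    rw [h2, S.imp_top_left] at hi
    exact hi
  · intro h
    refine le_trans ?_ (E.map_mono (prod.lift (𝟙 X) (𝟙 X)) h)
    unfold eq'
    rw [S.Pi_bc, S.map_imp, ← E.map_comp, ← E.map_comp]
    have e1 : prod.map (prod.lift (𝟙 X) (𝟙 X)) (𝟙 (S.ho.pow X))
          ≫ prod.lift (prod.fst ≫ prod.snd) prod.snd
        = 𝟙 _ := by
      apply Limits.prod.hom_ext <;> simp [prod.lift_fst, prod.lift_snd, prod.lift_fst_assoc, prod.lift_snd_assoc]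
    have e2 : prod.map (prod.lift (𝟙 X) (𝟙 X)) (𝟙 (S.ho.pow X))
          ≫ prod.lift (prod.fst ≫ prod.fst) prod.snd
        = 𝟙 _ := by
      apply Limits.prod.hom_ext <;> simp [prod.lift_fst, prod.lift_snd, prod.lift_fst_assoc, prod.lift_snd_assoc]
    rw [e1, e2, E.map_id, S.Pi_adj, S.map_top, S.imp_self]

/-- The main construction: a `Setup` yields a tripos. -/
noncomputable def tripos : Tripos E where
  inf := S.inf'
  sup := S.sup'
  himp := S.imp
  top := fun _ => ⊤
  bot := S.bot'
  inf_le_left := S.inf'_le_left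
  inf_le_right := S.inf'_le_right
  le_inf := fun _ _ _ h1 h2 => S.le_inf' h1 h2
  le_sup_left := S.le_sup'_left
  le_sup_right := S.le_sup'_right
  sup_le := fun _ _ _ h1 h2 => S.sup'_le h1 h2
  le_top := fun _ => le_top
  bot_le := S.bot'_le
  himp_adj := S.himp_adj'
  map_inf := S.map_inf'
  map_sup := S.map_sup'
  map_himp := S.map_imp
  map_top := fun f => S.map_top f
  map_bot := S.map_bot'
  Sig := S.sigE
  Sig_adj := S.sigE_adj
  Sig_bc := S.sigE_bc
  Pi := S.Pi
  Pi_adj := S.Pi_adj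
  Pi_bc := S.Pi_bc
  eq := S.eq'
  eq_spec := fun α => S.eq'_spec α
  pow := S.ho.pow
  mem := S.ho.mem
  classify := S.ho.classify

end Setup

end Statement12Aux

/-- If `(C,P)` is a higher-order `Σ`-doctrine with full
co-comprehension which is also a restricted `Σ(C_P^o)`-doctrine, then the
opposite doctrine `(C,P^o)` is a tripos with full comprehension. -/
theorem statement12 {C : Type u} [Category.{v} C] [HasFiniteProducts C]
    {P : C → Type w} [∀ A, PartialOrder (P A)] [∀ A, OrderBot (P A)]
    (D : Doctrine C P)
    -- Σ-doctrine: left adjoints along projections with Beck–Chevalley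
    (Sig : ∀ (Γ A : C), P (Γ ⨯ A) → P Γ)
    (Sig_adj : ∀ {Γ A : C} (ψ : P (Γ ⨯ A)) (β : P Γ),
      Sig Γ A ψ ≤ β ↔ ψ ≤ D.map prod.fst β)
    (Sig_bc : ∀ {Γ Δ A : C} (f : Δ ⟶ Γ) (ψ : P (Γ ⨯ A)),
      D.map f (Sig Γ A ψ) = Sig Δ A (D.map (prod.map f (𝟙 A)) ψ))
    -- higher order
    (hho : HigherOrder D)
    -- full co-comprehension
    (co : CoComprehension D) (hfull : co.IsFull)
    -- restricted Σ(C_P^o)-structure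
    (SigCo : ∀ {A : C} (α : P A), P (co.oObj α) → P A)
    (SigCo_adj : ∀ {A : C} (α : P A) (γ : P (co.oObj α)) (β : P A),
      SigCo α γ ≤ β ↔ γ ≤ D.map (co.oArr α) β)
    (SigCo_bc : ∀ {X A : C} (f : X ⟶ A) (α : P A)
      (q : co.oObj (D.map f α) ⟶ co.oObj α),
      q ≫ co.oArr α = co.oArr (D.map f α) ≫ f →
      ∀ ξ : P A,
        D.map f (SigCo α (D.map (co.oArr α) ξ))
          = SigCo (D.map f α) (D.map q (D.map (co.oArr α) ξ))) :
    ∃ cmp : Comprehension D.op, cmp.IsFull ∧ Nonempty (Tripos D.op) := by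
  let S : Statement12Aux.Setup D.op :=
    { Pi := fun Γ A ψ => OrderDual.toDual (Sig Γ A (OrderDual.ofDual ψ))
      Pi_adj := fun ψ β => Sig_adj (OrderDual.ofDual ψ) (OrderDual.ofDual β)
      Pi_bc := fun f ψ =>
        congrArg OrderDual.toDual (Sig_bc f (OrderDual.ofDual ψ))
      ho :=
        { pow := hho.pow
          mem := fun A => OrderDual.toDual (hho.mem A)
          classify := fun A Y φ => by
            obtain ⟨χ, hχ⟩ := hho.classify A Y (OrderDual.ofDual φ)
            exact ⟨χ, congrArg OrderDual.toDual hχ⟩ }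
      cmp :=
        { cObj := fun α => co.oObj (OrderDual.ofDual α)
          cArr := fun α => co.oArr (OrderDual.ofDual α)
          map_cArr := fun α =>
            congrArg OrderDual.toDual (co.map_oArr (OrderDual.ofDual α))
          univ := fun α f h => co.univ (OrderDual.ofDual α) f h }
      full := fun A α β g hg =>
        hfull A (OrderDual.ofDual β) (OrderDual.ofDual α) g hg
      PiC := fun α γ =>
        OrderDual.toDual (SigCo (OrderDual.ofDual α) (OrderDual.ofDual γ))
      PiC_adj := fun α γ β =>
        SigCo_adj (OrderDual.ofDual α) (OrderDual.ofDual γ) (OrderDual.ofDual β)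
      PiC_bc := fun f α q hq ξ =>
        congrArg OrderDual.toDual
          (SigCo_bc f (OrderDual.ofDual α) q hq (OrderDual.ofDual ξ)) }
  exact ⟨S.cmp, S.full, ⟨S.tripos⟩⟩
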